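/- arXiv:1908.04024 — 4 statements merged into one kernel-verified Lean document; each statement's English description precedes it below -/
import Mathlib

section
/- For a finite set X, a probability distribution P on X, and a function f : X → ℝ, the minimum over all probability distributions Q on X of D(Q‖P) + E_Q[f] equals -log(E_P[exp(-f)]), where D(Q‖P) = Σ_x Q(x) log(Q(x)/P(x)) is the Kullback–Leibler divergence. -/
open Real Finset

/-- Gibbs variational formula: the minimum over probability mass functions `Q` on a
nonempty finite set `X` of `D(Q‖P) + E_Q[f]` is `-log E_P[exp(-f)]`. -/
theorem gibbs_variational_formula {X : Type*} [Fintype X] [Nonempty X]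
    (P : X → ℝ) (hPpos : ∀ x, 0 < P x) (hPsum : ∑ x, P x = 1) (f : X → ℝ) :
    IsLeast
      {v : ℝ | ∃ Q : X → ℝ, (∀ x, 0 ≤ Q x) ∧ (∑ x, Q x = 1) ∧
        v = (∑ x, Q x * Real.log (Q x / P x)) + ∑ x, Q x * f x}
      (-Real.log (∑ x, P x * Real.exp (-f x))) := by
  set Z : ℝ := ∑ x, P x * Real.exp (-f x) with hZdef
  have hZpos : 0 < Z := Finset.sum_pos (fun x _ => mul_pos (hPpos x) (exp_pos _))
    Finset.univ_nonempty
  constructor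
  · -- membership: take Q* x = P x * exp (-f x) / Z
    refine ⟨fun x => P x * Real.exp (-f x) / Z, fun x => div_nonneg (mul_nonneg (hPpos x).le (exp_pos _).le) hZpos.le, ?_, ?_⟩
    · rw [← Finset.sum_div, ← hZdef, div_self hZpos.ne']
    · have hterm : ∀ x : X,
          (P x * Real.exp (-f x) / Z) * Real.log ((P x * Real.exp (-f x) / Z) / P x)
            + (P x * Real.exp (-f x) / Z) * f x
          = (P x * Real.exp (-f x) / Z) * (-Real.log Z) := by
        intro x
        have hP := hPpos x
        have h1 : (P x * Real.exp (-f x) / Z) / P x = Real.exp (-f x) / Z := by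
          field_simp
        rw [h1, Real.log_div (exp_ne_zero _) hZpos.ne', Real.log_exp]
        ring
      rw [← Finset.sum_add_distrib]
      rw [Finset.sum_congr rfl (fun x _ => hterm x), ← Finset.sum_mul, ← Finset.sum_div,
        ← hZdef, div_self hZpos.ne']
      ring
  · -- lower bound
    rintro v ⟨Q, hQ0, hQ1, rfl⟩
    have key : ∀ x : X, Q x - P x * Real.exp (-f x) / Z ≤
        Q x * Real.log (Q x / P x) + Q x * f x + Q x * Real.log Z := by
      intro x
      rcases eq_or_lt_of_le (hQ0 x) with h | h
      · rw [← h]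
        simp only [zero_mul, mul_zero, add_zero, zero_add, zero_sub]
        have : 0 ≤ P x * Real.exp (-f x) / Z :=
          div_nonneg (mul_nonneg (hPpos x).le (exp_pos _).le) hZpos.le
        linarith
      · -- Q x > 0
        have hP := hPpos x
        have hQs : P x * Real.exp (-f x) / Z / Q x > 0 := by positivity
        have hlog := Real.log_le_sub_one_of_pos hQs
        have hle : 1 - P x * Real.exp (-f x) / Z / Q x ≤
            -(Real.log (P x * Real.exp (-f x) / Z / Q x)) := by linarith
        have hlogeq : -(Real.log (P x * Real.exp (-f x) / Z / Q x)) =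
            Real.log (Q x / P x) + f x + Real.log Z := by
          rw [Real.log_div (by positivity) h.ne', Real.log_div (by positivity) hZpos.ne',
            Real.log_mul hP.ne' (exp_ne_zero _), Real.log_exp,
            Real.log_div h.ne' hP.ne']
          ring
        rw [hlogeq] at hle
        have := mul_le_mul_of_nonneg_left hle (hQ0 x)
        calc Q x - P x * Real.exp (-f x) / Z
            = Q x * (1 - P x * Real.exp (-f x) / Z / Q x) := by field_simp
          _ ≤ Q x * (Real.log (Q x / P x) + f x + Real.log Z) := this
          _ = Q x * Real.log (Q x / P x) + Q x * f x + Q x * Real.log Z := by ring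
    have hsum : ∑ x, (Q x - P x * Real.exp (-f x) / Z) ≤
        ∑ x, (Q x * Real.log (Q x / P x) + Q x * f x + Q x * Real.log Z) :=
      Finset.sum_le_sum (fun x _ => key x)
    have hL : ∑ x, (Q x - P x * Real.exp (-f x) / Z) = 0 := by
      rw [Finset.sum_sub_distrib, hQ1, ← Finset.sum_div, ← hZdef, div_self hZpos.ne']
      ring
    have hR : ∑ x, (Q x * Real.log (Q x / P x) + Q x * f x + Q x * Real.log Z)
        = (∑ x, Q x * Real.log (Q x / P x)) + (∑ x, Q x * f x) + Real.log Z := by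
      simp only [Finset.sum_add_distrib, ← Finset.sum_mul, hQ1, one_mul]
    rw [hL, hR] at hsum
    linarith
end

section
/- For a strictly positive probability mass function P on a finite set X and positive weights w : X → ℝ, the function λ ↦ λ · log(Σ_x P(x) · w(x)^{1/λ}) is convex on (0, ∞). -/
open Real Finset

lemma sum_pw_pos {X : Type*} [Fintype X] [Nonempty X]
    (P : X → ℝ) (hPpos : ∀ x, 0 < P x) (w : X → ℝ) (hw : ∀ x, 0 < w x) (t : ℝ) :
    0 < ∑ x, P x * w x ^ t :=
  Finset.sum_pos (fun x _ => mul_pos (hPpos x) (Real.rpow_pos_of_pos (hw x) t))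
    Finset.univ_nonempty

lemma logsum_convex {X : Type*} [Fintype X] [Nonempty X]
    (P : X → ℝ) (hPpos : ∀ x, 0 < P x) (w : X → ℝ) (hw : ∀ x, 0 < w x) :
    ConvexOn ℝ Set.univ (fun t : ℝ => Real.log (∑ x, P x * w x ^ t)) := by
  refine ⟨convex_univ, ?_⟩
  intro t₁ _ t₂ _ a b ha hb hab
  rcases eq_or_lt_of_le ha with ha0 | ha
  · have hb1 : b = 1 := by linarith
    simp [← ha0, hb1]
  rcases eq_or_lt_of_le hb with hb0 | hb
  · have ha1 : a = 1 := by linarith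
    simp [← hb0, ha1]
  have hS₁ := sum_pw_pos P hPpos w hw t₁
  have hS₂ := sum_pw_pos P hPpos w hw t₂
  have hpq : Real.HolderConjugate (1 / a) (1 / b) := by
    constructor
    · rw [one_div, one_div, inv_inv, inv_inv, inv_one]; exact hab
    · positivity
    · positivity
  have hHold := Real.inner_le_Lp_mul_Lq_of_nonneg (s := Finset.univ)
    (f := fun x => P x ^ a * w x ^ (a * t₁)) (g := fun x => P x ^ b * w x ^ (b * t₂)) hpq
    (fun x _ => le_of_lt (mul_pos (Real.rpow_pos_of_pos (hPpos x) a)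
      (Real.rpow_pos_of_pos (hw x) _)))
    (fun x _ => le_of_lt (mul_pos (Real.rpow_pos_of_pos (hPpos x) b)
      (Real.rpow_pos_of_pos (hw x) _)))
  have hfg : ∀ x : X, (P x ^ a * w x ^ (a * t₁)) * (P x ^ b * w x ^ (b * t₂))
      = P x * w x ^ (a • t₁ + b • t₂) := by
    intro x
    rw [smul_eq_mul, smul_eq_mul, Real.rpow_add (hw x)]
    have : P x ^ a * P x ^ b = P x := by
      rw [← Real.rpow_add (hPpos x), hab, Real.rpow_one]
    ring_nf
    rw [mul_comm (P x ^ a), mul_assoc, mul_assoc, ← mul_assoc (P x ^ a), this]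
    ring
  have hf : ∀ x : X, (P x ^ a * w x ^ (a * t₁)) ^ (1 / a) = P x * w x ^ t₁ := by
    intro x
    rw [Real.mul_rpow (Real.rpow_pos_of_pos (hPpos x) a).le
      (Real.rpow_pos_of_pos (hw x) _).le, ← Real.rpow_mul (hPpos x).le,
      ← Real.rpow_mul (hw x).le]
    congr 1
    · rw [mul_one_div, div_self ha.ne']; exact Real.rpow_one _
    · congr 1; field_simp
  have hg : ∀ x : X, (P x ^ b * w x ^ (b * t₂)) ^ (1 / b) = P x * w x ^ t₂ := by
    intro x
    rw [Real.mul_rpow (Real.rpow_pos_of_pos (hPpos x) b).le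
      (Real.rpow_pos_of_pos (hw x) _).le, ← Real.rpow_mul (hPpos x).le,
      ← Real.rpow_mul (hw x).le]
    congr 1
    · rw [mul_one_div, div_self hb.ne']; exact Real.rpow_one _
    · congr 1; field_simp
  simp only [hfg, hf, hg] at hHold
  have hlog : Real.log (∑ x, P x * w x ^ (a • t₁ + b • t₂))
      ≤ Real.log ((∑ x, P x * w x ^ t₁) ^ a * (∑ x, P x * w x ^ t₂) ^ b) := by
    apply Real.log_le_log (sum_pw_pos P hPpos w hw _)
    convert hHold using 2 <;> rw [one_div_one_div]
  calc Real.log (∑ x, P x * w x ^ (a • t₁ + b • t₂))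
      ≤ Real.log ((∑ x, P x * w x ^ t₁) ^ a * (∑ x, P x * w x ^ t₂) ^ b) := hlog
    _ = a • Real.log (∑ x, P x * w x ^ t₁) + b • Real.log (∑ x, P x * w x ^ t₂) := by
        rw [Real.log_mul (Real.rpow_pos_of_pos hS₁ a).ne' (Real.rpow_pos_of_pos hS₂ b).ne',
          Real.log_rpow hS₁, Real.log_rpow hS₂, smul_eq_mul, smul_eq_mul]

/-- The function `λ ↦ λ · log (Σ_x P(x) w(x)^{1/λ})` is convex on `(0,∞)`. -/
theorem lambdaA_convex {X : Type*} [Fintype X] [Nonempty X]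
    (P : X → ℝ) (hPpos : ∀ x, 0 < P x) (hPsum : ∑ x, P x = 1)
    (w : X → ℝ) (hw : ∀ x, 0 < w x) :
    ConvexOn ℝ (Set.Ioi (0 : ℝ))
      (fun l : ℝ => l * Real.log (∑ x, P x * w x ^ (1 / l))) := by
  obtain ⟨-, hg⟩ := logsum_convex P hPpos w hw
  refine ⟨convex_Ioi 0, ?_⟩
  intro l₁ hl₁ l₂ hl₂ a b ha hb hab
  simp only [Set.mem_Ioi] at hl₁ hl₂
  rcases eq_or_lt_of_le ha with ha0 | ha
  · have hb1 : b = 1 := by linarith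
    simp [← ha0, hb1]
  rcases eq_or_lt_of_le hb with hb0 | hb
  · have ha1 : a = 1 := by linarith
    simp [← hb0, ha1]
  set l := a * l₁ + b * l₂ with hl
  have hlpos : 0 < l := by positivity
  have ha' : (0:ℝ) ≤ a * l₁ / l := by positivity
  have hb' : (0:ℝ) ≤ b * l₂ / l := by positivity
  have hab' : a * l₁ / l + b * l₂ / l = 1 := by
    field_simp
    exact hl.symm
  have hkey := hg (Set.mem_univ (1 / l₁)) (Set.mem_univ (1 / l₂)) ha' hb' hab'
  have h1 : a * l₁ / l * (1 / l₁) = a / l := by field_simp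
  have h2 : b * l₂ / l * (1 / l₂) = b / l := by field_simp
  have hcomb : (a * l₁ / l) • (1 / l₁) + (b * l₂ / l) • (1 / l₂) = 1 / l := by
    simp only [smul_eq_mul]
    rw [h1, h2, ← add_div, hab]
  rw [hcomb] at hkey
  have := mul_le_mul_of_nonneg_left hkey hlpos.le
  simp only [smul_eq_mul] at *
  calc l * Real.log (∑ x, P x * w x ^ (1 / l))
      ≤ l * (a * l₁ / l * Real.log (∑ x, P x * w x ^ (1 / l₁))
          + b * l₂ / l * Real.log (∑ x, P x * w x ^ (1 / l₂))) := this
    _ = a * (l₁ * Real.log (∑ x, P x * w x ^ (1 / l₁)))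
          + b * (l₂ * Real.log (∑ x, P x * w x ^ (1 / l₂))) := by
        field_simp
end

section
/- Gallager's E_0 function is concave: for a strictly positive probability mass function P on finite X and a strictly positive channel W : X × Y → (0,∞) with Σ_y W(y|x) = 1, the function E_0(ρ) = −log Σ_y ( Σ_x P(x) W(y|x)^{1/(1+ρ)} )^{1+ρ} is concave in ρ on [0, ∞). -/
open Real Finset

/-- Two-function Hölder: `∑ u^θ v^(1-θ) ≤ (∑ u)^θ (∑ v)^(1-θ)`. -/
lemma holder_two {ι : Type*} {s : Finset ι} (u v : ι → ℝ)
    (hu : ∀ i ∈ s, 0 ≤ u i) (hv : ∀ i ∈ s, 0 ≤ v i)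
    {θ : ℝ} (h0 : 0 < θ) (h1 : θ < 1) :
    ∑ i ∈ s, u i ^ θ * v i ^ (1 - θ) ≤
      (∑ i ∈ s, u i) ^ θ * (∑ i ∈ s, v i) ^ (1 - θ) := by
  have hθ' : 0 < 1 - θ := by linarith
  have hpq : Real.HolderConjugate (1/θ) (1/(1-θ)) := by
    constructor
    · rw [one_div, one_div, inv_inv, inv_inv]; ring
    · exact one_div_pos.mpr h0
    · exact one_div_pos.mpr hθ'
  have h := Real.inner_le_Lp_mul_Lq_of_nonneg (s := s)
      (f := fun i => u i ^ θ) (g := fun i => v i ^ (1-θ)) hpq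
      (fun i _ => Real.rpow_nonneg (hu i ‹_›) _)
      (fun i _ => Real.rpow_nonneg (hv i ‹_›) _)
  have e1 : ∀ i ∈ s, (u i ^ θ) ^ (1/θ) = u i := by
    intro i hi
    rw [← Real.rpow_mul (hu i hi), mul_one_div, div_self h0.ne', Real.rpow_one]
  have e2 : ∀ i ∈ s, (v i ^ (1-θ)) ^ (1/(1-θ)) = v i := by
    intro i hi
    rw [← Real.rpow_mul (hv i hi), mul_one_div, div_self hθ'.ne', Real.rpow_one]
  rw [Finset.sum_congr rfl e1, Finset.sum_congr rfl e2] at h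
  rw [one_div_one_div, one_div_one_div] at h
  exact h

/-- Gallager's `E₀` function is concave in `ρ` on `[0,∞)`. -/
theorem E0_concave {X Y : Type*} [Fintype X] [Nonempty X] [Fintype Y] [Nonempty Y]
    (P : X → ℝ) (hPpos : ∀ x, 0 < P x) (hPsum : ∑ x, P x = 1)
    (W : X → Y → ℝ) (hWpos : ∀ x y, 0 < W x y) (hWsum : ∀ x, ∑ y, W x y = 1) :
    ConcaveOn ℝ (Set.Ici (0 : ℝ))
      (fun ρ : ℝ =>
        -Real.log (∑ y, (∑ x, P x * W x y ^ (1 / (1 + ρ))) ^ (1 + ρ))) := by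
  -- basic positivity facts
  set S : ℝ → Y → ℝ := fun t y => ∑ x, P x * W x y ^ (1/t) with hS
  set F : ℝ → ℝ := fun t => ∑ y, (S t y) ^ t with hF
  have Spos : ∀ t y, 0 < S t y := fun t y =>
    Finset.sum_pos (fun x _ => mul_pos (hPpos x) (Real.rpow_pos_of_pos (hWpos x y) _))
      Finset.univ_nonempty
  have Fpos : ∀ t, 0 < F t := fun t =>
    Finset.sum_pos (fun y _ => Real.rpow_pos_of_pos (Spos t y) _) Finset.univ_nonempty
  -- the key log-convexity inequality
  have key : ∀ t1 t2 a b : ℝ, 0 < t1 → 0 < t2 → 0 < a → 0 < b → a + b = 1 →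
      F (a*t1 + b*t2) ≤ F t1 ^ a * F t2 ^ b := by
    intro t1 t2 a b ht1 ht2 ha hb hab
    set t : ℝ := a*t1 + b*t2 with htdef
    have ht : 0 < t := by positivity
    set α : ℝ := a*t1/t with hα
    set β : ℝ := b*t2/t with hβ
    have hα0 : 0 < α := by positivity
    have hβ0 : 0 < β := by positivity
    have hαβ : α + β = 1 := by
      rw [hα, hβ, ← add_div, ← htdef, div_self ht.ne']
    have hα1 : α < 1 := by linarith
    -- pointwise Hölder in x
    have stepA : ∀ y : Y, (S t y) ^ t ≤ ((S t1 y) ^ t1) ^ a * ((S t2 y) ^ t2) ^ b := by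
      intro y
      have hterm : ∀ x : X, P x * W x y ^ (1/t) =
          (P x * W x y ^ (1/t1)) ^ α * (P x * W x y ^ (1/t2)) ^ β := by
        intro x
        rw [Real.mul_rpow (hPpos x).le (Real.rpow_nonneg (hWpos x y).le _),
            Real.mul_rpow (hPpos x).le (Real.rpow_nonneg (hWpos x y).le _)]
        rw [← Real.rpow_mul (hWpos x y).le, ← Real.rpow_mul (hWpos x y).le]
        rw [mul_mul_mul_comm, ← Real.rpow_add (hPpos x), hαβ, Real.rpow_one,
            ← Real.rpow_add (hWpos x y)]
        congr 1
        rw [hα, hβ]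
        field_simp
        rw [hab]
      have hST : S t y ≤ (S t1 y) ^ α * (S t2 y) ^ β := by
        have := holder_two (s := (Finset.univ : Finset X))
            (fun x => P x * W x y ^ (1/t1)) (fun x => P x * W x y ^ (1/t2))
            (fun x _ => mul_nonneg (hPpos x).le (Real.rpow_nonneg (hWpos x y).le _))
            (fun x _ => mul_nonneg (hPpos x).le (Real.rpow_nonneg (hWpos x y).le _)) hα0 hα1
        have hβ' : (1 : ℝ) - α = β := by linarith
        rw [hβ'] at this
        calc S t y = ∑ x, (P x * W x y ^ (1/t1)) ^ α * (P x * W x y ^ (1/t2)) ^ β := by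
              exact Finset.sum_congr rfl fun x _ => hterm x
          _ ≤ _ := this
      calc (S t y) ^ t ≤ ((S t1 y) ^ α * (S t2 y) ^ β) ^ t := by
            apply Real.rpow_le_rpow (Spos t y).le hST ht.le
        _ = ((S t1 y) ^ t1) ^ a * ((S t2 y) ^ t2) ^ b := by
            rw [Real.mul_rpow (Real.rpow_nonneg (Spos t1 y).le _)
                (Real.rpow_nonneg (Spos t2 y).le _),
              ← Real.rpow_mul (Spos t1 y).le, ← Real.rpow_mul (Spos t2 y).le,
              ← Real.rpow_mul (Spos t1 y).le, ← Real.rpow_mul (Spos t2 y).le]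
            congr 2
            · rw [hα]; field_simp
            · rw [hβ]; field_simp
    -- Hölder in y
    have stepB : ∑ y, ((S t1 y) ^ t1) ^ a * ((S t2 y) ^ t2) ^ b ≤ F t1 ^ a * F t2 ^ b := by
      have hb' : (1 : ℝ) - a = b := by linarith
      have := holder_two (s := (Finset.univ : Finset Y))
          (fun y => (S t1 y) ^ t1) (fun y => (S t2 y) ^ t2)
          (fun y _ => Real.rpow_nonneg (Spos t1 y).le _)
          (fun y _ => Real.rpow_nonneg (Spos t2 y).le _) ha (by linarith)
      rw [hb'] at this
      exact this
    calc F t = ∑ y, (S t y) ^ t := rfl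
      _ ≤ ∑ y, ((S t1 y) ^ t1) ^ a * ((S t2 y) ^ t2) ^ b :=
          Finset.sum_le_sum fun y _ => stepA y
      _ ≤ F t1 ^ a * F t2 ^ b := stepB
  -- conclude concavity
  refine ⟨convex_Ici 0, ?_⟩
  intro ρ1 hρ1 ρ2 hρ2 a b ha hb hab
  simp only [smul_eq_mul]
  rcases eq_or_lt_of_le ha with ha0 | ha'
  · have : b = 1 := by linarith
    simp [← ha0, this]
  rcases eq_or_lt_of_le hb with hb0 | hb'
  · have : a = 1 := by linarith
    simp [← hb0, this]
  have hρ1' : (0:ℝ) ≤ ρ1 := hρ1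
  have hρ2' : (0:ℝ) ≤ ρ2 := hρ2
  have ht1 : (0:ℝ) < 1 + ρ1 := by linarith
  have ht2 : (0:ℝ) < 1 + ρ2 := by linarith
  have hsum : 1 + (a*ρ1 + b*ρ2) = a*(1+ρ1) + b*(1+ρ2) := by
    rw [mul_add, mul_add]; rw [mul_one, mul_one]; linarith
  have hk := key (1+ρ1) (1+ρ2) a b ht1 ht2 ha' hb' hab
  have goal2 : Real.log (F (a*(1+ρ1) + b*(1+ρ2))) ≤
      a * Real.log (F (1+ρ1)) + b * Real.log (F (1+ρ2)) := by
    calc Real.log (F (a*(1+ρ1) + b*(1+ρ2))) ≤ Real.log (F (1+ρ1) ^ a * F (1+ρ2) ^ b) :=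
          Real.log_le_log (Fpos _) hk
      _ = a * Real.log (F (1+ρ1)) + b * Real.log (F (1+ρ2)) := by
          rw [Real.log_mul (Real.rpow_pos_of_pos (Fpos _) _).ne' (Real.rpow_pos_of_pos (Fpos _) _).ne',
            Real.log_rpow (Fpos _), Real.log_rpow (Fpos _)]
  have hFeq : ∀ ρ : ℝ, (∑ y, (∑ x, P x * W x y ^ (1 / (1 + ρ))) ^ (1 + ρ)) = F (1+ρ) :=
    fun ρ => rfl
  simp only [hFeq]
  rw [hsum]
  linarith
end

section
/- Stationarity of the dual at λ = 1+ρ: let A(y,r) = log Σ_x P(x) W(y|x)^{1/r} and E_1(ρ,λ) = −log Σ_y exp( 2A(y,1+ρ) − (λ(1−ρ)/(1+ρ)) A(y,λ) ). Suppose A(y,λ) does not depend on y (write A(λ)); then for 0 < ρ ≤ 1, E_1(ρ,λ) = ((1−ρ)/(1+ρ))·λA(λ) − log|Y| − 2A(1+ρ), which is a convex function of λ on (0,∞), attaining its infimum over λ > 0 at the minimizer of λA(λ) (scaled by the nonnegative constant (1−ρ)/(1+ρ)). -/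
open Real Finset

/-- Convexity of `λ ↦ λ·A(λ)` on `(0,∞)`, via Hölder / weighted AM-GM. -/
theorem mulA_convex {X Y : Type*} [Fintype X] [Nonempty X] [Fintype Y] [Nonempty Y]
    (P : X → ℝ) (hPpos : ∀ x, 0 < P x)
    (W : X → Y → ℝ) (hWpos : ∀ x y, 0 < W x y)
    (A : ℝ → ℝ)
    (hA : ∀ r : ℝ, 0 < r → ∀ y : Y, Real.log (∑ x, P x * W x y ^ (1 / r)) = A r) :
    ConvexOn ℝ (Set.Ioi (0:ℝ)) (fun l => l * A l) := by
  classical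
  obtain ⟨y₀⟩ := (inferInstance : Nonempty Y)
  set S : ℝ → ℝ := fun r => ∑ x, P x * W x y₀ ^ (1/r) with hS
  have hSpos : ∀ r, 0 < S r := fun r =>
    Finset.sum_pos (fun x _ => mul_pos (hPpos x) (Real.rpow_pos_of_pos (hWpos x y₀) _))
      Finset.univ_nonempty
  have hAS : ∀ r : ℝ, 0 < r → A r = Real.log (S r) := fun r hr => (hA r hr y₀).symm
  refine ⟨convex_Ioi 0, ?_⟩
  intro a ha b hb t s ht hs hts
  simp only [smul_eq_mul]
  rcases ht.eq_or_lt with rfl | ht'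
  · have hs1 : s = 1 := by linarith
    subst hs1; simp
  rcases hs.eq_or_lt with rfl | hs'
  · have ht1 : t = 1 := by linarith
    subst ht1; simp
  have ha' : (0:ℝ) < a := ha
  have hb' : (0:ℝ) < b := hb
  set m := t * a + s * b with hmdef
  have hm0 : 0 < m := add_pos (mul_pos ht' ha') (mul_pos hs' hb')
  set θ := t * a / m with hθdef
  have hθ0 : 0 < θ := div_pos (mul_pos ht' ha') hm0
  have h1θ : 1 - θ = s * b / m := by
    rw [hθdef, eq_div_iff hm0.ne', sub_mul, div_mul_cancel₀ _ hm0.ne']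
    rw [hmdef]; ring
  have h1θ0 : 0 < 1 - θ := by rw [h1θ]; exact div_pos (mul_pos hs' hb') hm0
  have hexp : 1/a * θ + 1/b * (1 - θ) = 1/m := by
    rw [h1θ, hθdef]; field_simp; linarith
  have hterm : ∀ x : X, P x * W x y₀ ^ (1/m)
      = (P x * W x y₀ ^ (1/a)) ^ θ * (P x * W x y₀ ^ (1/b)) ^ (1 - θ) := by
    intro x
    have hW := (hWpos x y₀).le
    symm
    rw [Real.mul_rpow (hPpos x).le (Real.rpow_nonneg hW _),
        Real.mul_rpow (hPpos x).le (Real.rpow_nonneg hW _),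
        ← Real.rpow_mul hW, ← Real.rpow_mul hW,
        mul_mul_mul_comm, ← Real.rpow_add (hPpos x), ← Real.rpow_add (hWpos x y₀)]
    rw [show θ + (1 - θ) = (1:ℝ) by ring, hexp, Real.rpow_one]
  have htermpos : ∀ (r : ℝ) (x : X), 0 < P x * W x y₀ ^ (1/r) := fun r x =>
    mul_pos (hPpos x) (Real.rpow_pos_of_pos (hWpos x y₀) _)
  have hden : 0 < S a ^ θ * S b ^ (1 - θ) :=
    mul_pos (Real.rpow_pos_of_pos (hSpos a) _) (Real.rpow_pos_of_pos (hSpos b) _)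
  have hgm : ∀ x ∈ Finset.univ (α := X),
      ((P x * W x y₀ ^ (1/a)) / S a) ^ θ * ((P x * W x y₀ ^ (1/b)) / S b) ^ (1 - θ)
        ≤ θ * ((P x * W x y₀ ^ (1/a)) / S a) + (1 - θ) * ((P x * W x y₀ ^ (1/b)) / S b) :=
    fun x _ => Real.geom_mean_le_arith_mean2_weighted hθ0.le h1θ0.le
      (div_pos (htermpos a x) (hSpos a)).le (div_pos (htermpos b x) (hSpos b)).le (by ring)
  have hlhs : ∀ x : X,
      ((P x * W x y₀ ^ (1/a)) / S a) ^ θ * ((P x * W x y₀ ^ (1/b)) / S b) ^ (1 - θ)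
        = (P x * W x y₀ ^ (1/m)) / (S a ^ θ * S b ^ (1 - θ)) := by
    intro x
    rw [Real.div_rpow (htermpos a x).le (hSpos a).le,
        Real.div_rpow (htermpos b x).le (hSpos b).le, hterm x]
    ring
  have hkey : S m ≤ S a ^ θ * S b ^ (1 - θ) := by
    rw [← div_le_one hden]
    calc S m / (S a ^ θ * S b ^ (1 - θ))
        = ∑ x : X, ((P x * W x y₀ ^ (1/a)) / S a) ^ θ * ((P x * W x y₀ ^ (1/b)) / S b) ^ (1 - θ) := by
          rw [hS]; rw [Finset.sum_div]
          exact (Finset.sum_congr rfl fun x _ => (hlhs x)).symm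
      _ ≤ ∑ x : X, (θ * ((P x * W x y₀ ^ (1/a)) / S a) + (1 - θ) * ((P x * W x y₀ ^ (1/b)) / S b)) :=
          Finset.sum_le_sum hgm
      _ = 1 := by
          rw [Finset.sum_add_distrib, ← Finset.mul_sum, ← Finset.mul_sum,
            ← Finset.sum_div, ← Finset.sum_div]
          rw [hS]
          rw [div_self (hSpos a).ne', div_self (hSpos b).ne']
          ring
  have hlog : Real.log (S m) ≤ θ * Real.log (S a) + (1 - θ) * Real.log (S b) := by
    calc Real.log (S m) ≤ Real.log (S a ^ θ * S b ^ (1 - θ)) :=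
          Real.log_le_log (hSpos m) hkey
      _ = θ * Real.log (S a) + (1 - θ) * Real.log (S b) := by
          rw [Real.log_mul (Real.rpow_pos_of_pos (hSpos a) _).ne'
            (Real.rpow_pos_of_pos (hSpos b) _).ne',
            Real.log_rpow (hSpos a), Real.log_rpow (hSpos b)]
  have hθm : m * θ = t * a := by rw [hθdef]; field_simp
  have h1θm : m * (1 - θ) = s * b := by rw [h1θ]; field_simp
  rw [hAS a ha', hAS b hb', hAS m hm0]
  have h2 : m * (θ * Real.log (S a) + (1 - θ) * Real.log (S b))
      = t * (a * Real.log (S a)) + s * (b * Real.log (S b)) := by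
    rw [mul_add, ← mul_assoc, ← mul_assoc, hθm, h1θm]; ring
  have h3 := mul_le_mul_of_nonneg_left hlog hm0.le
  linarith

/-- For symmetric channels (`A(y,r)` independent of `y`), the dual objective
`E₁(ρ,λ)` equals `((1−ρ)/(1+ρ))·λA(λ) − log|Y| − 2A(1+ρ)`, is convex in `λ` on
`(0,∞)`, and attains its infimum at any minimizer of `λ·A(λ)`. -/
theorem E1_symmetric_form {X Y : Type*} [Fintype X] [Nonempty X] [Fintype Y] [Nonempty Y]
    (P : X → ℝ) (hPpos : ∀ x, 0 < P x) (hPsum : ∑ x, P x = 1)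
    (W : X → Y → ℝ) (hWpos : ∀ x y, 0 < W x y)
    (A : ℝ → ℝ)
    (hA : ∀ r : ℝ, 0 < r → ∀ y : Y, Real.log (∑ x, P x * W x y ^ (1 / r)) = A r)
    (ρ : ℝ) (hρ0 : 0 < ρ) (hρ1 : ρ ≤ 1) :
    (let E1 : ℝ → ℝ := fun l =>
      -Real.log (∑ y : Y, Real.exp (2 * A (1 + ρ) - l * (1 - ρ) / (1 + ρ) * A l));
     (∀ l : ℝ, 0 < l →
        E1 l = (1 - ρ) / (1 + ρ) * (l * A l)
          - Real.log (Fintype.card Y) - 2 * A (1 + ρ))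
     ∧ ConvexOn ℝ (Set.Ioi (0 : ℝ)) E1
     ∧ ∀ l₀ : ℝ, 0 < l₀ → (∀ l : ℝ, 0 < l → l₀ * A l₀ ≤ l * A l) →
        ∀ l : ℝ, 0 < l → E1 l₀ ≤ E1 l) := by
  intro E1
  have hcard : (0:ℝ) < (Fintype.card Y : ℝ) := by
    exact_mod_cast Fintype.card_pos
  have hc : (0:ℝ) ≤ (1 - ρ) / (1 + ρ) := div_nonneg (by linarith) (by linarith)
  have hform : ∀ l : ℝ, E1 l = (1 - ρ) / (1 + ρ) * (l * A l)
      - Real.log (Fintype.card Y) - 2 * A (1 + ρ) := by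
    intro l
    have hsum : (∑ y : Y, Real.exp (2 * A (1 + ρ) - l * (1 - ρ) / (1 + ρ) * A l))
        = (Fintype.card Y : ℝ) * Real.exp (2 * A (1 + ρ) - l * (1 - ρ) / (1 + ρ) * A l) := by
      rw [Finset.sum_const, Finset.card_univ, nsmul_eq_mul]
    show -Real.log _ = _
    rw [hsum, Real.log_mul hcard.ne' (Real.exp_ne_zero _), Real.log_exp]
    ring
  refine ⟨fun l _ => hform l, ?_, ?_⟩
  · have hconv0 := mulA_convex P hPpos W hWpos A hA
    refine ⟨convex_Ioi 0, ?_⟩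
    intro p hp q hq t s ht hs hts
    have h := hconv0.2 hp hq ht hs hts
    simp only [smul_eq_mul] at h ⊢
    rw [hform, hform, hform]
    have hmul := mul_le_mul_of_nonneg_left h hc
    have hR : t * ((1 - ρ) / (1 + ρ) * (p * A p) - Real.log (Fintype.card Y) - 2 * A (1 + ρ))
        + s * ((1 - ρ) / (1 + ρ) * (q * A q) - Real.log (Fintype.card Y) - 2 * A (1 + ρ))
        = (1 - ρ) / (1 + ρ) * (t * (p * A p) + s * (q * A q))
          - Real.log (Fintype.card Y) - 2 * A (1 + ρ) := by
      have hs1 : s = 1 - t := by linarith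
      subst hs1; ring
    rw [hR]
    linarith
  · intro l₀ hl₀ hmin l hl
    rw [hform l₀, hform l]
    have := mul_le_mul_of_nonneg_left (hmin l hl) hc
    linarith
end
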